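/- Let V be a finite-dimensional 𝔽-vector space with a nondegenerate symmetric bilinear form B, and let x₁, x₂, y₁, y₂ ∈ V be such that span{x₁,x₂} and span{y₁,y₂} are two-dimensional subspaces on which B vanishes identically (two-dimensional isotropic subspaces). Let L : V → V be the linear map L(v) = B(x₂,v)·x₁ − B(x₁,v)·x₂ + B(y₂,v)·y₁ − B(y₁,v)·y₂ (the operator associated to ω = x₁∧x₂ + y₁∧y₂), let W = Im L, and let ρ be the rank of the restriction of B to W. Then the pair (dim W, ρ) is one of the following six: (4,4), (4,2), (4,0), (2,1), (2,0), (0,0). In particular, if dim W = 4 then ρ is even, and if dim W = 2 then ρ ≤ 1. -/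

import Mathlib

set_option linter.unusedSectionVars false

section helpers
variable {F V : Type*} [Field F] [AddCommGroup V] [Module F V] [FiniteDimensional F V]

lemma dual_surj (B : LinearMap.BilinForm F V) (hnd : B.Nondegenerate)
    {n : ℕ} (vv : Fin n → V) (hindep : LinearIndependent F vv) (c : Fin n → F) :
    ∃ u, ∀ i, B (vv i) u = c i := by
  set Φ : V →ₗ[F] (Fin n → F) := LinearMap.pi (fun i => B (vv i)) with hΦ
  have hsurj : LinearMap.range Φ = ⊤ := by
    by_contra h
    obtain ⟨ψ, hψ0, hψ⟩ := Submodule.exists_dual_map_eq_bot_of_lt_top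
      (lt_top_iff_ne_top.mpr h) inferInstance
    have hψval : ∀ y : Fin n → F, ψ y = ∑ i, y i * ψ (Pi.single i 1) := by
      intro y
      conv_lhs => rw [← Finset.univ_sum_single y]
      rw [map_sum]
      congr 1; ext i
      have : (Pi.single i (y i) : Fin n → F) = y i • (Pi.single i 1 : Fin n → F) := by
        rw [← Pi.single_smul]; simp
      rw [this, map_smul, smul_eq_mul]
    have hzero : ∀ u, ψ (Φ u) = 0 := by
      intro u
      have : Φ u ∈ LinearMap.range Φ := LinearMap.mem_range_self _ u
      have h2 : ψ (Φ u) ∈ Submodule.map ψ (LinearMap.range Φ) :=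
        Submodule.mem_map_of_mem this
      rw [hψ] at h2
      simpa using h2
    have hcomb : (∑ i, ψ (Pi.single i 1) • vv i) = 0 := by
      apply hnd.1
      intro u
      have h1 := hzero u
      rw [hψval (Φ u)] at h1
      rw [map_sum, LinearMap.sum_apply]
      simp only [map_smul, LinearMap.smul_apply, smul_eq_mul]
      rw [← h1]
      apply Finset.sum_congr rfl
      intro i _
      simp [Φ, mul_comm]
    have hall := (Fintype.linearIndependent_iff.mp hindep) _ hcomb
    apply hψ0
    apply LinearMap.ext
    intro y
    rw [hψval y]
    simp [hall]
  obtain ⟨u, hu⟩ := (LinearMap.range_eq_top.mp hsurj) c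
  exact ⟨u, fun i => by rw [← congr_fun hu i]; rfl⟩


lemma caseA (B : LinearMap.BilinForm F V) (hsymm : B.IsSymm) (hnd : B.Nondegenerate)
    (L : V →ₗ[F] V) (W rad : Submodule F V) (ρ : ℕ) (v z : V)
    (hLvz : ∀ w, L w = B z w • v - B v w • z) (hvv : B v v = 0) (hvz : B v z = 0)
    (hW : W = LinearMap.range L)
    (hrad : ∀ u, u ∈ rad ↔ u ∈ W ∧ ∀ w ∈ W, B u w = 0)
    (hρ : ρ = Module.finrank F ↥W - Module.finrank F ↥rad) :
    (Module.finrank F ↥W = 0 ∧ ρ = 0) ∨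
    (Module.finrank F ↥W = 2 ∧ ρ ≤ 1) := by
  by_cases hind : LinearIndependent F ![v, z]
  · right
    have hrange : Set.range ![v, z] = {v, z} := by
      ext u; simp [Fin.exists_fin_two, or_comm]
    have hWspan : W = Submodule.span F {v, z} := by
      rw [hW]
      apply le_antisymm
      · rintro _ ⟨w, rfl⟩
        rw [hLvz w]
        exact Submodule.sub_mem _
          (Submodule.smul_mem _ _ (Submodule.subset_span (by simp)))
          (Submodule.smul_mem _ _ (Submodule.subset_span (by simp)))
      · rw [Submodule.span_le]
        rintro u hu
        simp only [Set.mem_insert_iff, Set.mem_singleton_iff] at hu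
        rcases hu with h | h <;> rw [h]
        · obtain ⟨u, hu⟩ := dual_surj B hnd ![v, z] hind ![0, 1]
          have h0 := hu 0; have h1 := hu 1
          simp only [Matrix.cons_val_zero, Matrix.cons_val_one, Matrix.head_cons] at h0 h1
          exact ⟨u, by rw [hLvz u, h0, h1]; simp⟩
        · obtain ⟨u, hu⟩ := dual_surj B hnd ![v, z] hind ![-1, 0]
          have h0 := hu 0; have h1 := hu 1
          simp only [Matrix.cons_val_zero, Matrix.cons_val_one, Matrix.head_cons] at h0 h1
          exact ⟨u, by rw [hLvz u, h0, h1]; simp⟩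
    have hdW : Module.finrank F ↥W = 2 := by
      have := finrank_span_eq_card hind
      rw [hrange] at this
      rw [hWspan, this, Fintype.card_fin]
    have hv0 : v ≠ 0 := by
      have := hind.ne_zero 0
      simpa using this
    have hvW : v ∈ W := by
      rw [hWspan]; exact Submodule.subset_span (by simp)
    have hvrad : v ∈ rad := by
      refine (hrad v).mpr ⟨hvW, fun w hw => ?_⟩
      rw [hWspan] at hw
      obtain ⟨m, n, rfl⟩ := Submodule.mem_span_pair.mp hw
      simp [map_add, map_smul, hvv, hvz]
    have h1le : 1 ≤ Module.finrank F ↥rad := by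
      have hle : Submodule.span F {v} ≤ rad := by
        rw [Submodule.span_singleton_le_iff_mem]; exact hvrad
      calc 1 = Module.finrank F ↥(Submodule.span F {v}) :=
            (finrank_span_singleton hv0).symm
        _ ≤ Module.finrank F ↥rad := Submodule.finrank_mono hle
    have hle2 : Module.finrank F ↥rad ≤ 2 := by
      rw [← hdW]
      exact Submodule.finrank_mono (fun u hu => ((hrad u).mp hu).1)
    exact ⟨hdW, by omega⟩
  · left
    rw [LinearIndependent.pair_iff] at hind
    push_neg at hind
    obtain ⟨s, t, hst, hne⟩ := hind
    have hL0 : ∀ w, L w = 0 := by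
      intro w
      rw [hLvz w, sub_eq_zero]
      by_cases hs : s = 0
      · have ht : t ≠ 0 := fun h => hne hs h
        have h1 : t • z = -(s • v) := eq_neg_of_add_eq_zero_right hst
        have hz : z = (t⁻¹ * (-s)) • v := by
          calc z = t⁻¹ • (t • z) := by rw [smul_smul, inv_mul_cancel₀ ht, one_smul]
            _ = t⁻¹ • (-(s • v)) := by rw [h1]
            _ = (t⁻¹ * (-s)) • v := by rw [smul_neg, smul_smul, mul_neg, neg_smul]
        rw [hz]
        simp only [map_smul, LinearMap.smul_apply, smul_eq_mul, smul_smul]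
        rw [mul_comm]
      · have h1 : s • v = -(t • z) := eq_neg_of_add_eq_zero_left hst
        have hv : v = (s⁻¹ * (-t)) • z := by
          calc v = s⁻¹ • (s • v) := by rw [smul_smul, inv_mul_cancel₀ hs, one_smul]
            _ = s⁻¹ • (-(t • z)) := by rw [h1]
            _ = (s⁻¹ * (-t)) • z := by rw [smul_neg, smul_smul, mul_neg, neg_smul]
        rw [hv]
        simp only [map_smul, LinearMap.smul_apply, smul_eq_mul, smul_smul]
        rw [mul_comm]
    have hWbot : W = ⊥ := by
      rw [hW, LinearMap.range_eq_bot]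
      exact LinearMap.ext hL0
    have hradbot : rad = ⊥ := by
      rw [eq_bot_iff]
      intro u hu
      have := ((hrad u).mp hu).1
      rwa [hWbot] at this
    rw [hWbot, hradbot] at hρ
    rw [hWbot]
    have hb : Module.finrank F (⊥ : Submodule F V) = 0 := finrank_bot F V
    rw [hb] at hρ
    exact ⟨hb, by omega⟩

end helpers


/-- Let `B` be a nondegenerate symmetric bilinear form on `V`, and let
`span{x₁,x₂}` and `span{y₁,y₂}` be two-dimensional isotropic subspaces. For the operator
`L(v) = B(x₂,v)x₁ − B(x₁,v)x₂ + B(y₂,v)y₁ − B(y₁,v)y₂` associated to `ω = x₁∧x₂ + y₁∧y₂`,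
with `W = Im L` and `ρ` the rank of the restriction of `B` to `W` (i.e. `dim W` minus the
dimension of the radical of `B|_W`), the pair `(dim W, ρ)` is one of
`(4,4), (4,2), (4,0), (2,1), (2,0), (0,0)`. In particular, if `dim W = 4` then `ρ` is even,
and if `dim W = 2` then `ρ ≤ 1`. -/
theorem stmt_15 (F : Type*) [Field F] [CharZero F] [IsAlgClosed F]
    (V : Type*) [AddCommGroup V] [Module F V] [FiniteDimensional F V]
    (B : LinearMap.BilinForm F V) (hsymm : B.IsSymm) (hnd : B.Nondegenerate)
    (x₁ x₂ y₁ y₂ : V)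
    (hxdim : Module.finrank F ↥(Submodule.span F {x₁, x₂}) = 2)
    (hxiso : ∀ u ∈ Submodule.span F {x₁, x₂}, ∀ w ∈ Submodule.span F {x₁, x₂}, B u w = 0)
    (hydim : Module.finrank F ↥(Submodule.span F {y₁, y₂}) = 2)
    (hyiso : ∀ u ∈ Submodule.span F {y₁, y₂}, ∀ w ∈ Submodule.span F {y₁, y₂}, B u w = 0)
    (L : V →ₗ[F] V)
    (hL : ∀ v, L v = B x₂ v • x₁ - B x₁ v • x₂ + B y₂ v • y₁ - B y₁ v • y₂)
    (W : Submodule F V) (hW : W = LinearMap.range L)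
    (rad : Submodule F V)
    (hrad : ∀ v, v ∈ rad ↔ v ∈ W ∧ ∀ w ∈ W, B v w = 0)
    (ρ : ℕ) (hρ : ρ = Module.finrank F ↥W - Module.finrank F ↥rad) :
    (Module.finrank F ↥W, ρ) ∈
      ({(4,4), (4,2), (4,0), (2,1), (2,0), (0,0)} : Set (ℕ × ℕ)) ∧
    (Module.finrank F ↥W = 4 → Even ρ) ∧
    (Module.finrank F ↥W = 2 → ρ ≤ 1) := by
  have hs : ∀ a b : V, B a b = B b a := fun a b => hsymm.eq a b
  have hx1X : x₁ ∈ Submodule.span F {x₁, x₂} := Submodule.subset_span (by simp)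
  have hx2X : x₂ ∈ Submodule.span F {x₁, x₂} := Submodule.subset_span (by simp)
  have hy1Y : y₁ ∈ Submodule.span F {y₁, y₂} := Submodule.subset_span (by simp)
  have hy2Y : y₂ ∈ Submodule.span F {y₁, y₂} := Submodule.subset_span (by simp)
  by_cases hXY : Submodule.span F {x₁, x₂} ⊓ Submodule.span F {y₁, y₂} = ⊥
  · -- the two isotropic planes intersect trivially
    have hsup : Submodule.span F {x₁, x₂} ⊔ Submodule.span F {y₁, y₂}
        = Submodule.span F {x₁, x₂, y₁, y₂} := by
      rw [← Submodule.span_union]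
      congr 1
      ext u
      simp only [Set.mem_union, Set.mem_insert_iff, Set.mem_singleton_iff]
      tauto
    have hdimsup : Module.finrank F
        ↥(Submodule.span F {x₁, x₂} ⊔ Submodule.span F {y₁, y₂}) = 4 := by
      have h := Submodule.finrank_sup_add_finrank_inf_eq
        (Submodule.span F {x₁, x₂}) (Submodule.span F {y₁, y₂})
      rw [hXY, hxdim, hydim] at h
      simpa using h
    have hrange4 : Set.range ![x₁, x₂, y₁, y₂] = {x₁, x₂, y₁, y₂} := by
      ext u
      constructor
      · rintro ⟨i, rfl⟩; fin_cases i <;> simp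
      · rintro (rfl | rfl | rfl | rfl)
        exacts [⟨0, rfl⟩, ⟨1, rfl⟩, ⟨2, rfl⟩, ⟨3, rfl⟩]
    have hfour : LinearIndependent F ![x₁, x₂, y₁, y₂] := by
      rw [linearIndependent_iff_card_eq_finrank_span, hrange4]
      rw [Set.finrank, ← hsup, hdimsup, Fintype.card_fin]
    have hrangex : Set.range ![x₁, x₂] = {x₁, x₂} := by
      ext u; simp [Fin.exists_fin_two, or_comm]
    have hrangey : Set.range ![y₁, y₂] = {y₁, y₂} := by
      ext u; simp [Fin.exists_fin_two, or_comm]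
    have hx12 : LinearIndependent F ![x₁, x₂] := by
      rw [linearIndependent_iff_card_eq_finrank_span, hrangex]
      rw [Set.finrank, hxdim, Fintype.card_fin]
    have hy12 : LinearIndependent F ![y₁, y₂] := by
      rw [linearIndependent_iff_card_eq_finrank_span, hrangey]
      rw [Set.finrank, hydim, Fintype.card_fin]
    -- W is the (4 dimensional) sum of the two planes
    have hmemrange : ∀ c : Fin 4 → F,
        c 1 • x₁ - c 0 • x₂ + c 3 • y₁ - c 2 • y₂ ∈ LinearMap.range L := by
      intro c
      obtain ⟨u, hu⟩ := dual_surj B hnd ![x₁, x₂, y₁, y₂] hfour c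
      have h0 : B x₁ u = c 0 := hu 0
      have h1 : B x₂ u = c 1 := hu 1
      have h2 : B y₁ u = c 2 := hu 2
      have h3 : B y₂ u = c 3 := hu 3
      exact ⟨u, by rw [hL u, h0, h1, h2, h3]⟩
    have hWeq : W = Submodule.span F {x₁, x₂} ⊔ Submodule.span F {y₁, y₂} := by
      rw [hW]
      apply le_antisymm
      · rintro _ ⟨w, rfl⟩
        rw [hL w]
        refine Submodule.sub_mem _ (Submodule.add_mem _ (Submodule.sub_mem _ ?_ ?_) ?_) ?_
        · exact Submodule.mem_sup_left (Submodule.smul_mem _ _ hx1X)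
        · exact Submodule.mem_sup_left (Submodule.smul_mem _ _ hx2X)
        · exact Submodule.mem_sup_right (Submodule.smul_mem _ _ hy1Y)
        · exact Submodule.mem_sup_right (Submodule.smul_mem _ _ hy2Y)
      · refine sup_le ?_ ?_ <;> rw [Submodule.span_le] <;> rintro u hu <;>
          simp only [Set.mem_insert_iff, Set.mem_singleton_iff] at hu
        · rcases hu with rfl | rfl
          · have := hmemrange ![0, 1, 0, 0]
            simpa using this
          · have := hmemrange ![-1, 0, 0, 0]
            simpa using this
        · rcases hu with rfl | rfl
          · have := hmemrange ![0, 0, 0, 1]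
            simpa using this
          · have := hmemrange ![0, 0, -1, 0]
            simpa using this
    have hdW : Module.finrank F ↥W = 4 := by rw [hWeq]; exact hdimsup
    -- the Gram matrix pairing the two planes
    set C : Matrix (Fin 2) (Fin 2) F := !![B x₁ y₁, B x₁ y₂; B x₂ y₁, B x₂ y₂] with hC
    set KX := Submodule.span F {x₁, x₂} ⊓ LinearMap.ker (B y₁) ⊓ LinearMap.ker (B y₂)
      with hKX
    set KY := Submodule.span F {y₁, y₂} ⊓ LinearMap.ker (B x₁) ⊓ LinearMap.ker (B x₂)
      with hKY
    let ΦX : (Fin 2 → F) →ₗ[F] V :=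
      { toFun := fun p => p 0 • x₁ + p 1 • x₂
        map_add' := fun p q => by simp only [Pi.add_apply, add_smul]; abel
        map_smul' := fun r p => by
          simp only [Pi.smul_apply, smul_eq_mul, RingHom.id_apply, smul_add, smul_smul] }
    let ΦY : (Fin 2 → F) →ₗ[F] V :=
      { toFun := fun p => p 0 • y₁ + p 1 • y₂
        map_add' := fun p q => by simp only [Pi.add_apply, add_smul]; abel
        map_smul' := fun r p => by
          simp only [Pi.smul_apply, smul_eq_mul, RingHom.id_apply, smul_add, smul_smul] }
    have hinjX : Function.Injective ΦX := by
      intro p q hpq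
      have hsub : (p 0 - q 0) • x₁ + (p 1 - q 1) • x₂ = 0 := by
        simp only [sub_smul]
        have : p 0 • x₁ + p 1 • x₂ = q 0 • x₁ + q 1 • x₂ := hpq
        rw [sub_add_sub_comm, this, sub_self]
      obtain ⟨e1, e2⟩ := LinearIndependent.pair_iff.mp hx12 _ _ hsub
      funext i
      fin_cases i
      · exact sub_eq_zero.mp e1
      · exact sub_eq_zero.mp e2
    have hinjY : Function.Injective ΦY := by
      intro p q hpq
      have hsub : (p 0 - q 0) • y₁ + (p 1 - q 1) • y₂ = 0 := by
        simp only [sub_smul]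
        have : p 0 • y₁ + p 1 • y₂ = q 0 • y₁ + q 1 • y₂ := hpq
        rw [sub_add_sub_comm, this, sub_self]
      obtain ⟨e1, e2⟩ := LinearIndependent.pair_iff.mp hy12 _ _ hsub
      funext i
      fin_cases i
      · exact sub_eq_zero.mp e1
      · exact sub_eq_zero.mp e2
    have hKXmap : KX = Submodule.map ΦX (LinearMap.ker (C.transpose.mulVecLin)) := by
      ext u
      simp only [hKX, Submodule.mem_inf, Submodule.mem_map, LinearMap.mem_ker]
      constructor
      · rintro ⟨⟨huX, hk1⟩, hk2⟩
        obtain ⟨p, q, hpq⟩ := Submodule.mem_span_pair.mp huX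
        have hk1' : p * B y₁ x₁ + q * B y₁ x₂ = 0 := by
          rw [← hpq] at hk1
          simpa [map_add, map_smul] using hk1
        have hk2' : p * B y₂ x₁ + q * B y₂ x₂ = 0 := by
          rw [← hpq] at hk2
          simpa [map_add, map_smul] using hk2
        refine ⟨![p, q], ?_, by simpa [ΦX] using hpq⟩
        rw [Matrix.mulVecLin_apply]
        funext i
        fin_cases i <;>
          simp [Matrix.mulVec, dotProduct, Fin.sum_univ_two, hC]
        · rw [hs x₁ y₁, hs x₂ y₁]
          linear_combination hk1'
        · rw [hs x₁ y₂, hs x₂ y₂]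
          linear_combination hk2'
      · rintro ⟨p, hker, rfl⟩
        have h0 := congr_fun hker 0
        have h1 := congr_fun hker 1
        simp [Matrix.mulVecLin_apply, Matrix.mulVec, dotProduct, Fin.sum_univ_two,
          Matrix.transpose_apply, Matrix.vecHead, Matrix.vecTail, hC] at h0 h1
        refine ⟨⟨?_, ?_⟩, ?_⟩
        · exact Submodule.add_mem _ (Submodule.smul_mem _ _ hx1X) (Submodule.smul_mem _ _ hx2X)
        · show B y₁ (p 0 • x₁ + p 1 • x₂) = 0
          simp only [map_add, map_smul, smul_eq_mul]
          rw [hs y₁ x₁, hs y₁ x₂]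
          linear_combination h0
        · show B y₂ (p 0 • x₁ + p 1 • x₂) = 0
          simp only [map_add, map_smul, smul_eq_mul]
          rw [hs y₂ x₁, hs y₂ x₂]
          linear_combination h1
    have hKYmap : KY = Submodule.map ΦY (LinearMap.ker (C.mulVecLin)) := by
      ext u
      simp only [hKY, Submodule.mem_inf, Submodule.mem_map, LinearMap.mem_ker]
      constructor
      · rintro ⟨⟨huY, hk1⟩, hk2⟩
        obtain ⟨p, q, hpq⟩ := Submodule.mem_span_pair.mp huY
        have hk1' : p * B x₁ y₁ + q * B x₁ y₂ = 0 := by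
          rw [← hpq] at hk1
          simpa [map_add, map_smul] using hk1
        have hk2' : p * B x₂ y₁ + q * B x₂ y₂ = 0 := by
          rw [← hpq] at hk2
          simpa [map_add, map_smul] using hk2
        refine ⟨![p, q], ?_, by simpa [ΦY] using hpq⟩
        rw [Matrix.mulVecLin_apply]
        funext i
        fin_cases i <;>
          simp [Matrix.mulVec, dotProduct, Fin.sum_univ_two, hC]
        · linear_combination hk1'
        · linear_combination hk2'
      · rintro ⟨p, hker, rfl⟩
        have h0 := congr_fun hker 0
        have h1 := congr_fun hker 1
        simp [Matrix.mulVecLin_apply, Matrix.mulVec, dotProduct, Fin.sum_univ_two,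
          Matrix.transpose_apply, Matrix.vecHead, Matrix.vecTail, hC] at h0 h1
        refine ⟨⟨?_, ?_⟩, ?_⟩
        · exact Submodule.add_mem _ (Submodule.smul_mem _ _ hy1Y) (Submodule.smul_mem _ _ hy2Y)
        · show B x₁ (p 0 • y₁ + p 1 • y₂) = 0
          simp only [map_add, map_smul, smul_eq_mul]
          linear_combination h0
        · show B x₂ (p 0 • y₁ + p 1 • y₂) = 0
          simp only [map_add, map_smul, smul_eq_mul]
          linear_combination h1
    have hfKX : Module.finrank F ↥KX
        = Module.finrank F ↥(LinearMap.ker (C.transpose.mulVecLin)) := by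
      rw [hKXmap]
      exact (Submodule.equivMapOfInjective ΦX hinjX _).finrank_eq.symm
    have hfKY : Module.finrank F ↥KY
        = Module.finrank F ↥(LinearMap.ker (C.mulVecLin)) := by
      rw [hKYmap]
      exact (Submodule.equivMapOfInjective ΦY hinjY _).finrank_eq.symm
    have hkerker : Module.finrank F ↥(LinearMap.ker (C.transpose.mulVecLin))
        = Module.finrank F ↥(LinearMap.ker (C.mulVecLin)) := by
      have h1 := LinearMap.finrank_range_add_finrank_ker (C.transpose.mulVecLin)
      have h2 := LinearMap.finrank_range_add_finrank_ker (C.mulVecLin)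
      have h3 : C.transpose.rank = C.rank := Matrix.rank_transpose C
      rw [Matrix.rank, Matrix.rank] at h3
      rw [h3] at h1
      omega
    have hKXX : KX ≤ Submodule.span F {x₁, x₂} := le_trans inf_le_left inf_le_left
    have hKYY : KY ≤ Submodule.span F {y₁, y₂} := le_trans inf_le_left inf_le_left
    -- the radical is the (orthogonal) sum of the two kernels
    have hradeq : rad = KX ⊔ KY := by
      apply le_antisymm
      · intro u hu
        obtain ⟨huW, hub⟩ := (hrad u).mp hu
        rw [hWeq] at huW
        obtain ⟨ux, hux, uy, huy, rfl⟩ := Submodule.mem_sup.mp huW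
        have key : ∀ t, t ∈ Submodule.span F {y₁, y₂} → t ∈ W → B t ux = 0 := by
          intro t htY htW
          rw [hs t ux]
          have ht1 : B (ux + uy) t = 0 := hub t htW
          have ht2 : B uy t = 0 := hyiso uy huy t htY
          have : B ux t + B uy t = 0 := by
            rw [← ht1]; simp [map_add]
          rw [ht2] at this
          simpa using this
        have keyx : ∀ t, t ∈ Submodule.span F {x₁, x₂} → t ∈ W → B t uy = 0 := by
          intro t htX htW
          rw [hs t uy]
          have ht1 : B (ux + uy) t = 0 := hub t htW
          have ht2 : B ux t = 0 := hxiso ux hux t htX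
          have : B ux t + B uy t = 0 := by
            rw [← ht1]; simp [map_add]
          rw [ht2] at this
          simpa using this
        have hy1W : y₁ ∈ W := by rw [hWeq]; exact Submodule.mem_sup_right hy1Y
        have hy2W : y₂ ∈ W := by rw [hWeq]; exact Submodule.mem_sup_right hy2Y
        have hx1W : x₁ ∈ W := by rw [hWeq]; exact Submodule.mem_sup_left hx1X
        have hx2W : x₂ ∈ W := by rw [hWeq]; exact Submodule.mem_sup_left hx2X
        refine Submodule.mem_sup.mpr ⟨ux, ?_, uy, ?_, rfl⟩
        · exact Submodule.mem_inf.mpr ⟨Submodule.mem_inf.mpr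
            ⟨hux, LinearMap.mem_ker.mpr (key y₁ hy1Y hy1W)⟩,
            LinearMap.mem_ker.mpr (key y₂ hy2Y hy2W)⟩
        · exact Submodule.mem_inf.mpr ⟨Submodule.mem_inf.mpr
            ⟨huy, LinearMap.mem_ker.mpr (keyx x₁ hx1X hx1W)⟩,
            LinearMap.mem_ker.mpr (keyx x₂ hx2X hx2W)⟩
      · refine sup_le ?_ ?_
        · intro u hu
          simp only [hKX, Submodule.mem_inf, LinearMap.mem_ker] at hu
          obtain ⟨⟨huX, h1⟩, h2⟩ := hu
          refine (hrad u).mpr ⟨by rw [hWeq]; exact Submodule.mem_sup_left huX, ?_⟩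
          intro w hw
          rw [hWeq] at hw
          obtain ⟨wx, hwx, wy, hwy, rfl⟩ := Submodule.mem_sup.mp hw
          have hA : B u wx = 0 := hxiso u huX wx hwx
          have hBw : B u wy = 0 := by
            obtain ⟨r, t, rfl⟩ := Submodule.mem_span_pair.mp hwy
            simp only [map_add, map_smul, smul_eq_mul]
            rw [hs u y₁, hs u y₂, h1, h2]
            ring
          simp [map_add, hA, hBw]
        · intro u hu
          simp only [hKY, Submodule.mem_inf, LinearMap.mem_ker] at hu
          obtain ⟨⟨huY, h1⟩, h2⟩ := hu
          refine (hrad u).mpr ⟨by rw [hWeq]; exact Submodule.mem_sup_right huY, ?_⟩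
          intro w hw
          rw [hWeq] at hw
          obtain ⟨wx, hwx, wy, hwy, rfl⟩ := Submodule.mem_sup.mp hw
          have hA : B u wy = 0 := hyiso u huY wy hwy
          have hBw : B u wx = 0 := by
            obtain ⟨r, t, rfl⟩ := Submodule.mem_span_pair.mp hwx
            simp only [map_add, map_smul, smul_eq_mul]
            rw [hs u x₁, hs u x₂, h1, h2]
            ring
          simp [map_add, hA, hBw]
    have hdisj : KX ⊓ KY = ⊥ := by
      rw [eq_bot_iff, ← hXY]
      exact inf_le_inf hKXX hKYY
    have hradf : Module.finrank F ↥rad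
        = Module.finrank F ↥KX + Module.finrank F ↥KY := by
      have h := Submodule.finrank_sup_add_finrank_inf_eq KX KY
      rw [hdisj] at h
      simp only [finrank_bot, add_zero] at h
      rw [hradeq, ← h]
    have hKXle : Module.finrank F ↥KX ≤ 2 := by
      rw [← hxdim]
      exact Submodule.finrank_mono hKXX
    have hKXKY : Module.finrank F ↥KX = Module.finrank F ↥KY := by
      rw [hfKX, hfKY, hkerker]
    refine ⟨?_, ?_, ?_⟩
    · simp only [Set.mem_insert_iff, Set.mem_singleton_iff, Prod.mk.injEq, hdW,
        true_and, false_and, false_or]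
      omega
    · intro _
      exact ⟨2 - Module.finrank F ↥KX, by omega⟩
    · intro h
      rw [hdW] at h
      omega
  · obtain ⟨v, hvm, hv0⟩ := Submodule.exists_mem_ne_zero_of_ne_bot hXY
    have hvX : v ∈ Submodule.span F {x₁, x₂} := (Submodule.mem_inf.mp hvm).1
    have hvY : v ∈ Submodule.span F {y₁, y₂} := (Submodule.mem_inf.mp hvm).2
    -- complete v to a basis of X
    have hXlt : Submodule.span F {v} < Submodule.span F {x₁, x₂} := by
      apply lt_of_le_of_ne
      · exact (Submodule.span_singleton_le_iff_mem v _).mpr hvX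
      · intro h
        rw [← h, finrank_span_singleton hv0] at hxdim
        exact absurd hxdim (by norm_num)
    obtain ⟨x, hxX, hxv⟩ := SetLike.exists_of_lt hXlt
    have hvx : LinearIndependent F ![v, x] :=
      (LinearIndependent.pair_iff' hv0).mpr
        (fun a ha => hxv (ha ▸ Submodule.smul_mem _ a (Submodule.mem_span_singleton_self v)))
    have hvxr : Set.range ![v, x] = {v, x} := by
      ext u; simp [Fin.exists_fin_two, or_comm]
    have hXeq : Submodule.span F {v, x} = Submodule.span F {x₁, x₂} := by
      apply Submodule.eq_of_le_of_finrank_le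
      · rw [Submodule.span_le]
        exact Set.insert_subset_iff.mpr ⟨hvX, Set.singleton_subset_iff.mpr hxX⟩
      · rw [hxdim]
        have := finrank_span_eq_card hvx
        rw [hvxr, Fintype.card_fin] at this
        omega
    -- complete v to a basis of Y
    have hYlt : Submodule.span F {v} < Submodule.span F {y₁, y₂} := by
      apply lt_of_le_of_ne
      · exact (Submodule.span_singleton_le_iff_mem v _).mpr hvY
      · intro h
        rw [← h, finrank_span_singleton hv0] at hydim
        exact absurd hydim (by norm_num)
    obtain ⟨y, hyY, hyv⟩ := SetLike.exists_of_lt hYlt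
    have hvy : LinearIndependent F ![v, y] :=
      (LinearIndependent.pair_iff' hv0).mpr
        (fun a ha => hyv (ha ▸ Submodule.smul_mem _ a (Submodule.mem_span_singleton_self v)))
    have hvyr : Set.range ![v, y] = {v, y} := by
      ext u; simp [Fin.exists_fin_two, or_comm]
    have hYeq : Submodule.span F {v, y} = Submodule.span F {y₁, y₂} := by
      apply Submodule.eq_of_le_of_finrank_le
      · rw [Submodule.span_le]
        exact Set.insert_subset_iff.mpr ⟨hvY, Set.singleton_subset_iff.mpr hyY⟩
      · rw [hydim]
        have := finrank_span_eq_card hvy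
        rw [hvyr, Fintype.card_fin] at this
        omega
    obtain ⟨a, b, hab⟩ := Submodule.mem_span_pair.mp
      (hXeq.symm ▸ (Submodule.subset_span (by simp) : x₁ ∈ Submodule.span F {x₁, x₂}))
    obtain ⟨c, d, hcd⟩ := Submodule.mem_span_pair.mp
      (hXeq.symm ▸ (Submodule.subset_span (by simp) : x₂ ∈ Submodule.span F {x₁, x₂}))
    obtain ⟨a', b', hab'⟩ := Submodule.mem_span_pair.mp
      (hYeq.symm ▸ (Submodule.subset_span (by simp) : y₁ ∈ Submodule.span F {y₁, y₂}))
    obtain ⟨c', d', hcd'⟩ := Submodule.mem_span_pair.mp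
      (hYeq.symm ▸ (Submodule.subset_span (by simp) : y₂ ∈ Submodule.span F {y₁, y₂}))
    set z := (a * d - b * c) • x + (a' * d' - b' * c') • y with hzdef
    have hLvz : ∀ w, L w = B z w • v - B v w • z := by
      intro w
      rw [hL w, ← hab, ← hcd, ← hab', ← hcd', hzdef]
      simp only [map_add, map_sub, map_smul, LinearMap.add_apply, LinearMap.sub_apply,
        LinearMap.smul_apply, smul_eq_mul, smul_add, smul_smul, add_smul, sub_smul, smul_sub]
      module
    have hvv : B v v = 0 := hxiso v hvX v hvX
    have hvz : B v z = 0 := by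
      rw [hzdef]
      simp only [map_add, map_smul, smul_eq_mul]
      rw [hxiso v hvX x hxX, hyiso v hvY y hyY]
      ring
    rcases caseA B hsymm hnd L W rad ρ v z hLvz hvv hvz hW hrad hρ with ⟨h0, h1⟩ | ⟨h0, h1⟩
    · exact ⟨by simp [Set.mem_insert_iff, Prod.mk.injEq, h0, h1],
        fun h => absurd (h0.symm.trans h) (by norm_num),
        fun h => absurd (h0.symm.trans h) (by norm_num)⟩
    · refine ⟨?_, fun h => absurd (h0.symm.trans h) (by norm_num), fun _ => h1⟩
      simp only [Set.mem_insert_iff, Set.mem_singleton_iff, Prod.mk.injEq, h0,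
        true_and, false_and, false_or]
      omega
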